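/- Let K be a field, N a natural number, and p : Fin N → K × K an injective family of N planar points, writing x k = (p k).1 and y k = (p k).2. Then the set of 'bad' parameters Bad = {θ ∈ K : the map k ↦ x k + θ · y k is not injective} is finite and has cardinality at most N·(N−1)/2. -/

import Mathlib

theorem bad_shear_parameters_finite_card
    {K : Type*} [Field K] {N : ℕ} (p : Fin N → K × K) (hp : Function.Injective p) :
    (setOf (fun θ : K => ¬ Function.Injective
        (fun k : Fin N => (p k).1 + θ * (p k).2))).Finite ∧
    Set.ncard (setOf (fun θ : K => ¬ Function.Injective
        (fun k : Fin N => (p k).1 + θ * (p k).2))) ≤ N * (N - 1) / 2 := by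
  classical
  set f : Fin N × Fin N → K :=
    fun ij => ((p ij.2).1 - (p ij.1).1) / ((p ij.1).2 - (p ij.2).2) with hf
  set Pairs : Finset (Fin N × Fin N) :=
    Finset.univ.filter (fun ij => ij.1 < ij.2) with hPairs
  set S : Finset K := Pairs.image f with hS
  -- key: from a collision at θ with indices i ≠ j, θ = f (i, j)
  have key : ∀ θ : K, ∀ i j : Fin N, i ≠ j →
      (p i).1 + θ * (p i).2 = (p j).1 + θ * (p j).2 → θ = f (i, j) := by
    intro θ i j hij heq
    have hy : (p i).2 - (p j).2 ≠ 0 := by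
      intro h0
      have hy' : (p i).2 = (p j).2 := by linear_combination h0
      have hx : (p i).1 = (p j).1 := by
        have h2 := heq
        rw [hy'] at h2
        linear_combination h2
      exact hij (hp (Prod.ext hx hy'))
    have : θ * ((p i).2 - (p j).2) = (p j).1 - (p i).1 := by ring_nf; linear_combination heq
    simp only [hf]
    field_simp
    linear_combination this
  -- Bad ⊆ S
  have hsub : (setOf (fun θ : K => ¬ Function.Injective
      (fun k : Fin N => (p k).1 + θ * (p k).2))) ⊆ (S : Set K) := by
    intro θ hθ
    simp only [Set.mem_setOf_eq, Function.Injective, not_forall] at hθ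
    obtain ⟨i, j, heq, hij⟩ := hθ
    rcases lt_or_gt_of_ne hij with h | h
    · exact Finset.mem_coe.2 (Finset.mem_image.2 ⟨(i, j),
        Finset.mem_filter.2 ⟨Finset.mem_univ _, h⟩, (key θ i j hij heq).symm⟩)
    · refine Finset.mem_coe.2 (Finset.mem_image.2 ⟨(j, i),
        Finset.mem_filter.2 ⟨Finset.mem_univ _, h⟩, (key θ j i (Ne.symm hij) heq.symm).symm⟩)
  have hfin : (setOf (fun θ : K => ¬ Function.Injective
      (fun k : Fin N => (p k).1 + θ * (p k).2))).Finite :=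
    (S.finite_toSet).subset hsub
  refine ⟨hfin, ?_⟩
  -- count pairs
  have hcardPairs : Pairs.card = N * (N - 1) / 2 := by
    rw [hPairs, Finset.card_eq_sum_card_fiberwise (f := Prod.snd) (t := Finset.univ)
      (fun x _ => Finset.mem_univ _)]
    have : ∀ j : Fin N,
        ((Finset.univ.filter (fun ij : Fin N × Fin N => ij.1 < ij.2)).filter
          (fun ij => ij.2 = j)) = (Finset.Iio j).map
            ⟨fun i => (i, j), fun a b h => (Prod.mk.injEq _ _ _ _ ▸ h).1⟩ := by
      intro j
      ext ⟨a, b⟩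
      simp only [Finset.mem_filter, Finset.mem_univ, true_and, Finset.mem_map,
        Function.Embedding.coeFn_mk, Finset.mem_Iio, Prod.mk.injEq]
      constructor
      · rintro ⟨hab, rfl⟩; exact ⟨a, hab, rfl⟩
      · rintro ⟨i, hi, rfl, rfl⟩; exact ⟨hi, rfl⟩
    simp only [this, Finset.card_map, Fin.card_Iio]
    rw [Fin.sum_univ_eq_sum_range (fun i => i) N, Finset.sum_range_id]
  calc Set.ncard _ ≤ Set.ncard (S : Set K) :=
        Set.ncard_le_ncard hsub S.finite_toSet
    _ = S.card := Set.ncard_coe_finset S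
    _ ≤ Pairs.card := Finset.card_image_le
    _ = N * (N - 1) / 2 := hcardPairs
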